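/- Let N be a Poisson random measure on a measurable space (S, S) with intensity measure n, and let f : S → R be a simple measurable function with ∫ (|f|^2 ∧ 1) dn < ∞. Define I_N(f) = ∫ f(s) [N(ds) − 1{|f(s)| ≤ 1} n(ds)]. Then E(|I_N(f)| ∧ 1) ≤ 2 (∫ (|f|^2 ∧ 1) dn)^{1/2}. -/

import Mathlib

open MeasureTheory ProbabilityTheory Set
open scoped ENNReal

/-- The Poisson pmf with real rate. -/
noncomputable def ppmf (r : ℝ) (k : ℕ) : ℝ := Real.exp (-r) * r ^ k / (Nat.factorial k)

lemma ppmf_nonneg {r : ℝ} (hr : 0 ≤ r) (k : ℕ) : 0 ≤ ppmf r k := by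
  unfold ppmf; positivity

lemma hasSum_ppmf (r : ℝ) (hr : 0 ≤ r) : HasSum (ppmf r) 1 := by
  have := poissonPMFRealSum ⟨r, hr⟩
  exact this

lemma hasSum_ppmf_id (r : ℝ) (hr : 0 ≤ r) :
    HasSum (fun k : ℕ => (k : ℝ) * ppmf r k) r := by
  set g : ℕ → ℝ := ppmf r with hg
  have h1 : HasSum (fun k => r * g k) r := by simpa using (hasSum_ppmf r hr).mul_left r
  have key : (fun k : ℕ => ((k+1 : ℕ) : ℝ) * g (k+1)) = fun k => r * g k := by
    funext m
    have hfac : ((Nat.factorial (m+1) : ℝ)) = (m+1) * Nat.factorial m := by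
      push_cast [Nat.factorial_succ]; ring
    have hm : (Nat.factorial m : ℝ) ≠ 0 := Nat.cast_ne_zero.mpr (Nat.factorial_ne_zero m)
    simp only [hg, ppmf, hfac]
    field_simp
    push_cast; ring
  have h2 : HasSum (fun k : ℕ => ((k+1 : ℕ) : ℝ) * g (k+1)) r := key ▸ h1
  have := (hasSum_nat_add_iff (f := fun k : ℕ => (k : ℝ) * g k) 1).mp (by simpa using h2)
  simpa using this

lemma hasSum_ppmf_sq (r : ℝ) (hr : 0 ≤ r) :
    HasSum (fun k : ℕ => (k : ℝ)^2 * ppmf r k) (r + r^2) := by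
  set g : ℕ → ℝ := ppmf r with hg
  have h1 : HasSum (fun k => r^2 * g k) (r^2) := by simpa using (hasSum_ppmf r hr).mul_left (r^2)
  have key : (fun k : ℕ => ((k+2 : ℕ) : ℝ) * ((k+1 : ℕ) : ℝ) * g (k+2)) = fun k => r^2 * g k := by
    funext m
    have hfac : ((Nat.factorial (m+2) : ℝ)) = (m+2) * ((m+1) * Nat.factorial m) := by
      push_cast [Nat.factorial_succ]; ring
    have hm : (Nat.factorial m : ℝ) ≠ 0 := Nat.cast_ne_zero.mpr (Nat.factorial_ne_zero m)
    simp only [hg, ppmf, hfac, pow_succ]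
    field_simp
    push_cast; ring
  have h2 : HasSum (fun k : ℕ => ((k+2 : ℕ) : ℝ) * ((k+1 : ℕ) : ℝ) * g (k+2)) (r^2) := key ▸ h1
  have h3 : HasSum (fun k : ℕ => (k : ℝ) * ((k : ℝ) - 1) * g k) (r^2) := by
    have := (hasSum_nat_add_iff (f := fun k : ℕ => (k : ℝ) * ((k : ℝ) - 1) * g k) 2).mp (by
      convert h2 using 2 with m
      case e'_3 => rfl
      case e'_5 => push_cast; ring)
    simpa [Finset.sum_range_succ] using this
  have := (hasSum_ppmf_id r hr).add h3
  convert this using 2 with m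
  ring

section
variable {Ω : Type*} [MeasurableSpace Ω] (P : Measure Ω) [IsProbabilityMeasure P]
  (X : Ω → ℝ≥0∞) (r : ℝ)

lemma pois_lintegral (hX : Measurable X) (hr : 0 ≤ r)
    (hpmf : ∀ k : ℕ, P {ω | X ω = (k : ℝ≥0∞)} = ENNReal.ofReal (ppmf r k))
    (g : ℝ≥0∞ → ℝ≥0∞) :
    ∫⁻ ω, g (X ω) ∂P = ∑' k : ℕ, ENNReal.ofReal (ppmf r k) * g k := by
  set E : ℕ → Set Ω := fun k => X ⁻¹' {(k : ℝ≥0∞)} with hE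
  have hEm : ∀ k, MeasurableSet (E k) := fun k => hX (measurableSet_singleton _)
  have hEd : Pairwise (Function.onFun Disjoint E) := by
    intro i j hij
    refine Set.disjoint_left.mpr fun ω hi hj => hij ?_
    have : ((i : ℝ≥0∞)) = (j : ℝ≥0∞) := by
      rw [← hi, ← hj]
    exact_mod_cast this
  have hPE : ∀ k, P (E k) = ENNReal.ofReal (ppmf r k) := fun k => hpmf k
  have hsum : ∑' k : ℕ, ENNReal.ofReal (ppmf r k) = 1 := by
    rw [← ENNReal.ofReal_tsum_of_nonneg (ppmf_nonneg hr) (hasSum_ppmf r hr).summable]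
    rw [(hasSum_ppmf r hr).tsum_eq, ENNReal.ofReal_one]
  have hU : P (⋃ k, E k) = 1 := by
    rw [measure_iUnion hEd hEm]
    simp_rw [hPE]; exact hsum
  have hUc : P ((⋃ k, E k)ᶜ) = 0 := by
    rw [measure_compl (MeasurableSet.iUnion hEm) (measure_ne_top _ _), hU]
    simp
  calc ∫⁻ ω, g (X ω) ∂P
      = (∫⁻ ω in ⋃ k, E k, g (X ω) ∂P) + ∫⁻ ω in (⋃ k, E k)ᶜ, g (X ω) ∂P :=
        (lintegral_add_compl _ (MeasurableSet.iUnion hEm)).symm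
    _ = ∫⁻ ω in ⋃ k, E k, g (X ω) ∂P := by
        rw [setLIntegral_measure_zero _ _ hUc, add_zero]
    _ = ∑' k : ℕ, ∫⁻ ω in E k, g (X ω) ∂P := lintegral_iUnion hEm hEd _
    _ = ∑' k : ℕ, ENNReal.ofReal (ppmf r k) * g k := by
        refine tsum_congr fun k => ?_
        rw [setLIntegral_congr_fun (hEm k) (fun ω (hω : X ω = (k:ℝ≥0∞)) => by
          rw [hω])]
        rw [setLIntegral_const, hPE k, mul_comm]

lemma pois_lintegral_id (hX : Measurable X) (hr : 0 ≤ r)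
    (hpmf : ∀ k : ℕ, P {ω | X ω = (k : ℝ≥0∞)} = ENNReal.ofReal (ppmf r k)) :
    ∫⁻ ω, X ω ∂P = ENNReal.ofReal r := by
  rw [pois_lintegral P X r hX hr hpmf (fun x => x)]
  have : ∀ k : ℕ, ENNReal.ofReal (ppmf r k) * (k : ℝ≥0∞)
      = ENNReal.ofReal ((k : ℝ) * ppmf r k) := by
    intro k
    rw [ENNReal.ofReal_mul (Nat.cast_nonneg k), ENNReal.ofReal_natCast, mul_comm]
  simp_rw [this]
  rw [← ENNReal.ofReal_tsum_of_nonneg (fun k => mul_nonneg (Nat.cast_nonneg k) (ppmf_nonneg hr k))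
    (hasSum_ppmf_id r hr).summable, (hasSum_ppmf_id r hr).tsum_eq]

lemma pois_lintegral_sq (hX : Measurable X) (hr : 0 ≤ r)
    (hpmf : ∀ k : ℕ, P {ω | X ω = (k : ℝ≥0∞)} = ENNReal.ofReal (ppmf r k)) :
    ∫⁻ ω, (X ω)^2 ∂P = ENNReal.ofReal (r + r^2) := by
  rw [pois_lintegral P X r hX hr hpmf (fun x => x^2)]
  have : ∀ k : ℕ, ENNReal.ofReal (ppmf r k) * (k : ℝ≥0∞)^2
      = ENNReal.ofReal ((k : ℝ)^2 * ppmf r k) := by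
    intro k
    rw [ENNReal.ofReal_mul (sq_nonneg _), mul_comm]
    congr 1
    rw [← ENNReal.ofReal_natCast k, ← ENNReal.ofReal_pow (Nat.cast_nonneg k)]
  simp_rw [this]
  rw [← ENNReal.ofReal_tsum_of_nonneg (fun k => mul_nonneg (sq_nonneg _) (ppmf_nonneg hr k))
    (hasSum_ppmf_sq r hr).summable, (hasSum_ppmf_sq r hr).tsum_eq]

lemma pois_ae_lt_top (hX : Measurable X) (hr : 0 ≤ r)
    (hpmf : ∀ k : ℕ, P {ω | X ω = (k : ℝ≥0∞)} = ENNReal.ofReal (ppmf r k)) :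
    ∀ᵐ ω ∂P, X ω < ⊤ :=
  ae_lt_top hX (by rw [pois_lintegral_id P X r hX hr hpmf]; exact ENNReal.ofReal_ne_top)

lemma pois_integral_toReal (hX : Measurable X) (hr : 0 ≤ r)
    (hpmf : ∀ k : ℕ, P {ω | X ω = (k : ℝ≥0∞)} = ENNReal.ofReal (ppmf r k)) :
    ∫ ω, (X ω).toReal ∂P = r := by
  have hae : ∀ᵐ ω ∂P, ENNReal.ofReal ((X ω).toReal) = X ω :=
    (pois_ae_lt_top P X r hX hr hpmf).mono fun ω hω => ENNReal.ofReal_toReal hω.ne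
  rw [integral_eq_lintegral_of_nonneg_ae (ae_of_all _ fun ω => ENNReal.toReal_nonneg)
    hX.ennreal_toReal.aestronglyMeasurable]
  rw [lintegral_congr_ae hae, pois_lintegral_id P X r hX hr hpmf,
    ENNReal.toReal_ofReal hr]

lemma pois_integral_sq_toReal (hX : Measurable X) (hr : 0 ≤ r)
    (hpmf : ∀ k : ℕ, P {ω | X ω = (k : ℝ≥0∞)} = ENNReal.ofReal (ppmf r k)) :
    ∫ ω, (X ω).toReal ^ 2 ∂P = r + r^2 := by
  have hae : ∀ᵐ ω ∂P, ENNReal.ofReal ((X ω).toReal ^ 2) = (X ω)^2 :=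
    (pois_ae_lt_top P X r hX hr hpmf).mono fun ω hω => by
      rw [ENNReal.ofReal_pow ENNReal.toReal_nonneg, ENNReal.ofReal_toReal hω.ne]
  rw [integral_eq_lintegral_of_nonneg_ae (ae_of_all _ fun ω => sq_nonneg _)
    (hX.ennreal_toReal.pow_const 2).aestronglyMeasurable]
  rw [lintegral_congr_ae hae, pois_lintegral_sq P X r hX hr hpmf,
    ENNReal.toReal_ofReal (by positivity)]

lemma pois_memL2 (hX : Measurable X) (hr : 0 ≤ r)
    (hpmf : ∀ k : ℕ, P {ω | X ω = (k : ℝ≥0∞)} = ENNReal.ofReal (ppmf r k)) :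
    MemLp (fun ω => (X ω).toReal) 2 P := by
  have hsq : Integrable (fun ω => (X ω).toReal ^ 2) P := by
    refine ⟨(hX.ennreal_toReal.pow_const 2).aestronglyMeasurable, ?_⟩
    rw [hasFiniteIntegral_iff_norm]
    have hae : ∀ᵐ ω ∂P, ENNReal.ofReal ‖(X ω).toReal ^ 2‖ = (X ω)^2 :=
      (pois_ae_lt_top P X r hX hr hpmf).mono fun ω hω => by
        rw [Real.norm_eq_abs, abs_of_nonneg (sq_nonneg _),
          ENNReal.ofReal_pow ENNReal.toReal_nonneg, ENNReal.ofReal_toReal hω.ne]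
    rw [lintegral_congr_ae hae, pois_lintegral_sq P X r hX hr hpmf]
    exact ENNReal.ofReal_lt_top
  exact (memLp_two_iff_integrable_sq hX.ennreal_toReal.aestronglyMeasurable).mpr (by
    simpa [sq] using hsq)

lemma pois_prob_ne_zero (hX : Measurable X) (hr : 0 ≤ r)
    (hpmf : ∀ k : ℕ, P {ω | X ω = (k : ℝ≥0∞)} = ENNReal.ofReal (ppmf r k)) :
    P {ω | X ω ≠ 0} ≤ ENNReal.ofReal r := by
  have h0 : P {ω | X ω = 0} = ENNReal.ofReal (Real.exp (-r)) := by
    have := hpmf 0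
    simpa [ppmf] using this
  have hmeas : MeasurableSet {ω | X ω = 0} := hX (measurableSet_singleton _)
  have hcompl : {ω | X ω ≠ 0} = {ω | X ω = 0}ᶜ := rfl
  rw [hcompl, measure_compl hmeas (measure_ne_top _ _), measure_univ, h0]
  rw [tsub_le_iff_right, ← ENNReal.ofReal_add hr (Real.exp_nonneg _), ← ENNReal.ofReal_one]
  apply ENNReal.ofReal_le_ofReal
  have := Real.add_one_le_exp (-r)
  linarith

end

/-- `N` is a Poisson random measure on `(S, 𝒮)` with intensity `n`, under `P`:
the counts `N(·)(A)` are measurable, `N(A)` is Poisson distributed with mean `n(A)`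
whenever `n(A) < ∞`, and counts of pairwise disjoint sets are independent. -/
def IsPoissonRandomMeasure {Ω S : Type*} [MeasurableSpace Ω] [MeasurableSpace S]
    (P : Measure Ω) (N : Ω → Set S → ℝ≥0∞) (n : Measure S) : Prop :=
  (∀ A : Set S, MeasurableSet A → Measurable fun ω => N ω A) ∧
  (∀ A : Set S, MeasurableSet A → n A < ⊤ → ∀ k : ℕ,
    P {ω | N ω A = (k : ℝ≥0∞)} =
      ENNReal.ofReal (Real.exp (-(n A).toReal) * (n A).toReal ^ k / (Nat.factorial k))) ∧
  (∀ (m : ℕ) (A : Fin m → Set S), (∀ i, MeasurableSet (A i)) →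
    (Pairwise fun i j => Disjoint (A i) (A j)) →
    iIndepFun (fun i ω => N ω (A i)) P)

/-- For a simple function `f = Σ aⱼ 1_{Aⱼ}` (disjoint `Aⱼ` of finite `n`-measure), the
compensated Poisson integral `I_N(f) = ∫ f dN − ∫ f 1{|f| ≤ 1} dn` satisfies
`E(|I_N(f)| ∧ 1) ≤ 2 (∫ (|f|² ∧ 1) dn)^{1/2}`. -/
theorem poisson_integral_simple_bound {Ω S : Type*} [MeasurableSpace Ω] [MeasurableSpace S]
    (P : Measure Ω) [IsProbabilityMeasure P]
    (N : Ω → Set S → ℝ≥0∞) (n : Measure S)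
    (hN : IsPoissonRandomMeasure P N n)
    (k : ℕ) (A : Fin k → Set S) (a : Fin k → ℝ)
    (hAm : ∀ j, MeasurableSet (A j))
    (hdisj : Pairwise fun i j => Disjoint (A i) (A j))
    (hfin : ∀ j, n (A j) < ⊤) :
    ∫ ω, min |(∑ j, a j * (N ω (A j)).toReal) -
        ∑ j, (if |a j| ≤ 1 then a j * (n (A j)).toReal else 0)| 1 ∂P ≤
      2 * Real.sqrt (∑ j, min ((a j) ^ 2) 1 * (n (A j)).toReal) := by
  classical
  obtain ⟨hNm, hNd, hNi⟩ := hN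
  set r : Fin k → ℝ := fun j => (n (A j)).toReal with hrdef
  have hr : ∀ j, 0 ≤ r j := fun j => ENNReal.toReal_nonneg
  have hXm : ∀ j, Measurable (fun ω => N ω (A j)) := fun j => hNm (A j) (hAm j)
  have hpmf : ∀ j, ∀ m : ℕ, P {ω | N ω (A j) = (m : ℝ≥0∞)} = ENNReal.ofReal (ppmf (r j) m) :=
    fun j m => by simpa [ppmf] using hNd (A j) (hAm j) (hfin j) m
  set M : Fin k → Ω → ℝ := fun j ω => (N ω (A j)).toReal with hMdef
  have hMmeas : ∀ j, Measurable (M j) := fun j => (hXm j).ennreal_toReal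
  have hMint : ∀ j, ∫ ω, M j ω ∂P = r j :=
    fun j => pois_integral_toReal P _ (r j) (hXm j) (hr j) (hpmf j)
  have hM2 : ∀ j, ∫ ω, M j ω ^ 2 ∂P = r j + r j ^ 2 :=
    fun j => pois_integral_sq_toReal P _ (r j) (hXm j) (hr j) (hpmf j)
  have hML2 : ∀ j, MemLp (M j) 2 P :=
    fun j => pois_memL2 P _ (r j) (hXm j) (hr j) (hpmf j)
  set s : Finset (Fin k) := Finset.filter (fun j => |a j| ≤ 1) Finset.univ with hsdef
  set Y : Fin k → Ω → ℝ := fun j ω => a j * M j ω - a j * r j with hYdef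
  have hYL2 : ∀ j, MemLp (Y j) 2 P :=
    fun j => ((hML2 j).const_mul (a j)).sub (memLp_const _)
  have hYint : ∀ j, Integrable (Y j) P := fun j => (hYL2 j).integrable one_le_two
  have hEY : ∀ j, ∫ ω, Y j ω ∂P = 0 := by
    intro j
    have hMi : Integrable (M j) P := (hML2 j).integrable one_le_two
    rw [hYdef]
    simp only
    rw [integral_sub (hMi.const_mul _) (integrable_const _), integral_const_mul, hMint j,
      integral_const, probReal_univ, one_smul, sub_self]
  have hEYsq : ∀ j, ∫ ω, Y j ω ^ 2 ∂P = (a j)^2 * (r j + r j ^ 2)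
      - 2 * a j * (a j * r j) * r j + (a j * r j)^2 := by
    intro j
    have hMi : Integrable (M j) P := (hML2 j).integrable one_le_two
    have hM2i : Integrable (fun ω => M j ω ^ 2) P := by
      simpa [sq] using (hML2 j).integrable_sq
    have hexp : (fun ω => Y j ω ^ 2) = fun ω =>
        (a j)^2 * M j ω ^ 2 + ((-(2 * a j * (a j * r j))) * M j ω + (a j * r j)^2) := by
      funext ω; rw [hYdef]; ring
    have i1 : Integrable (fun ω => (a j)^2 * M j ω ^ 2) P := hM2i.const_mul _
    have i2 : Integrable (fun ω => (-(2 * a j * (a j * r j))) * M j ω) P := hMi.const_mul _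
    have i3 : Integrable (fun ω => (-(2 * a j * (a j * r j))) * M j ω + (a j * r j)^2) P :=
      i2.add (integrable_const _)
    rw [hexp, integral_add i1 i3, integral_add i2 (integrable_const _), integral_const_mul,
      integral_const_mul, hM2 j, hMint j, integral_const, probReal_univ,
      one_smul]
    ring
  have hVarY : ∀ j, variance (Y j) P = (a j)^2 * r j := by
    intro j
    rw [variance_eq_sub (hYL2 j)]
    have h1 : P[(Y j) ^ 2] = ∫ ω, Y j ω ^ 2 ∂P := by
      congr 1
    rw [h1, hEYsq j]
    have h2 : P[Y j] = 0 := hEY j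
    rw [h2]
    ring
  have hindep := hNi k A hAm hdisj
  have hindepY : ∀ i j, i ≠ j → IndepFun (Y i) (Y j) P := by
    intro i j hij
    have h := hindep.indepFun hij
    have hφ : ∀ l : Fin k, Measurable (fun x : ℝ≥0∞ => a l * x.toReal - a l * r l) :=
      fun l => (ENNReal.measurable_toReal.const_mul (a l)).sub measurable_const
    exact h.comp (hφ i) (hφ j)
  set Z : Ω → ℝ := fun ω => ∑ j ∈ s, Y j ω with hZdef
  have hZeq : (∑ j ∈ s, Y j) = Z := by
    funext ω; rw [hZdef]; simp
  have hZL2 : MemLp Z 2 P := hZeq ▸ memLp_finset_sum' s (fun j _ => hYL2 j)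
  set ts : ℝ := ∑ j ∈ s, (a j)^2 * r j with htsdef
  set tb : ℝ := ∑ j ∈ sᶜ, r j with htbdef
  have hts0 : 0 ≤ ts := Finset.sum_nonneg fun j _ => mul_nonneg (sq_nonneg _) (hr j)
  have htb0 : 0 ≤ tb := Finset.sum_nonneg fun j _ => hr j
  have hVarZ : variance Z P = ts := by
    rw [← hZeq, IndepFun.variance_sum (fun j _ => hYL2 j)
      (fun i _ j _ hij => hindepY i j hij)]
    exact Finset.sum_congr rfl fun j _ => hVarY j
  have hEZ : ∫ ω, Z ω ∂P = 0 := by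
    rw [hZdef]
    simp only
    rw [integral_finset_sum s (fun j _ => hYint j)]
    simp [hEY]
  have hEZ2 : ∫ ω, Z ω ^ 2 ∂P = ts := by
    have := variance_eq_sub hZL2
    rw [hVarZ] at this
    have h1 : P[Z ^ 2] = ∫ ω, Z ω ^ 2 ∂P := by congr 1
    have h2 : P[Z] = 0 := hEZ
    rw [h1, h2] at this
    linarith
  have habsZ : ∫ ω, |Z ω| ∂P ≤ Real.sqrt ts := by
    have h1 : MemLp |Z| 2 P := hZL2.abs
    have h2 := variance_nonneg (|Z|) P
    rw [variance_eq_sub h1] at h2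
    simp only [Pi.pow_apply, Pi.abs_apply] at h2
    have h3 : ∫ ω, |Z ω| ^ 2 ∂P = ∫ ω, Z ω ^ 2 ∂P := by simp [sq_abs]
    rw [h3, hEZ2] at h2
    rw [Real.le_sqrt (integral_nonneg fun ω => abs_nonneg _) hts0]
    linarith
  -- big jumps
  set B : Set Ω := ⋃ j ∈ sᶜ, {ω | N ω (A j) ≠ 0} with hBdef
  have hBm0 : ∀ j : Fin k, MeasurableSet {ω | N ω (A j) ≠ 0} := by
    intro j
    exact ((hXm j) (measurableSet_singleton 0)).compl
  have hBmeas : MeasurableSet B := Finset.measurableSet_biUnion _ fun j _ => hBm0 j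
  have hPB : (P B).toReal ≤ tb := by
    apply ENNReal.toReal_le_of_le_ofReal htb0
    calc P B ≤ ∑ j ∈ sᶜ, P {ω | N ω (A j) ≠ 0} := measure_biUnion_finset_le _ _
      _ ≤ ∑ j ∈ sᶜ, ENNReal.ofReal (r j) := Finset.sum_le_sum fun j _ =>
          pois_prob_ne_zero P _ (r j) (hXm j) (hr j) (hpmf j)
      _ = ENNReal.ofReal tb := by
          rw [htbdef, ENNReal.ofReal_sum_of_nonneg fun j _ => hr j]
  -- the functions
  set T : Ω → ℝ := fun ω => (∑ j, a j * M j ω) - ∑ j, (if |a j| ≤ 1 then a j * r j else 0)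
    with hTdef
  have hTm : Measurable T :=
    (Finset.measurable_sum Finset.univ fun j _ => (hMmeas j).const_mul (a j)).sub
      measurable_const
  have hZm : Measurable Z := Finset.measurable_sum s fun j _ =>
    ((hMmeas j).const_mul (a j)).sub measurable_const
  set F : Ω → ℝ := fun ω => min |T ω| 1 with hFdef
  set G : Ω → ℝ := fun ω => min |Z ω| 1 with hGdef
  have hF01 : ∀ ω, 0 ≤ F ω ∧ F ω ≤ 1 :=
    fun ω => ⟨le_min (abs_nonneg _) zero_le_one, min_le_right _ _⟩
  have hG01 : ∀ ω, 0 ≤ G ω ∧ G ω ≤ 1 :=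
    fun ω => ⟨le_min (abs_nonneg _) zero_le_one, min_le_right _ _⟩
  have hFint : Integrable F P := by
    refine Integrable.mono' (integrable_const 1) (hTm.abs.min measurable_const).aestronglyMeasurable
      (ae_of_all _ fun ω => ?_)
    rw [Real.norm_eq_abs, abs_of_nonneg (hF01 ω).1]
    exact (hF01 ω).2
  have hGint : Integrable G P := by
    refine Integrable.mono' (integrable_const 1) (hZm.abs.min measurable_const).aestronglyMeasurable
      (ae_of_all _ fun ω => ?_)
    rw [Real.norm_eq_abs, abs_of_nonneg (hG01 ω).1]
    exact (hG01 ω).2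
  have hHint : Integrable (B.indicator fun _ => (1:ℝ)) P := (integrable_const 1).indicator hBmeas
  -- pointwise bound
  have hpt : ∀ ω, F ω ≤ G ω + B.indicator (fun _ => (1:ℝ)) ω := by
    intro ω
    by_cases hω : ω ∈ B
    · rw [Set.indicator_of_mem hω]
      have := (hF01 ω).2
      have := (hG01 ω).1
      linarith
    · rw [Set.indicator_of_notMem hω, add_zero]
      have hzero : ∀ j ∈ sᶜ, M j ω = 0 := by
        intro j hj
        have hnot : ω ∉ {ω | N ω (A j) ≠ 0} := fun h => hω (Set.mem_biUnion hj h)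
        simp only [Set.mem_setOf_eq, not_not] at hnot
        rw [hMdef]; simp [hnot]
      have hTZ : T ω = Z ω := by
        rw [hTdef, hZdef]
        simp only
        have h1 : ∑ j, a j * M j ω = ∑ j ∈ s, a j * M j ω := by
          rw [← Finset.sum_add_sum_compl s fun j => a j * M j ω]
          have hz : ∑ j ∈ sᶜ, a j * M j ω = 0 :=
            Finset.sum_eq_zero fun j hj => by rw [hzero j hj, mul_zero]
          rw [hz, add_zero]
        have h2 : ∑ j, (if |a j| ≤ 1 then a j * r j else 0) = ∑ j ∈ s, a j * r j :=
          (Finset.sum_filter _ _).symm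
        rw [h1, h2, ← Finset.sum_sub_distrib]
      rw [hFdef, hGdef]
      simp only [hTZ]
      exact le_refl _
  have hstep : ∫ ω, F ω ∂P ≤ Real.sqrt ts + tb := by
    calc ∫ ω, F ω ∂P ≤ ∫ ω, (G ω + B.indicator (fun _ => (1:ℝ)) ω) ∂P :=
          integral_mono hFint (hGint.add hHint) hpt
      _ = (∫ ω, G ω ∂P) + ∫ ω, B.indicator (fun _ => (1:ℝ)) ω ∂P := integral_add hGint hHint
      _ ≤ (∫ ω, |Z ω| ∂P) + (P B).toReal := by
          apply add_le_add
          · exact integral_mono hGint (hZL2.integrable one_le_two).abs fun ω => min_le_left _ _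
          · rw [integral_indicator_const (1:ℝ) hBmeas, smul_eq_mul, mul_one, measureReal_def]
      _ ≤ Real.sqrt ts + tb := add_le_add habsZ hPB
  -- identify t
  set t : ℝ := ∑ j, min ((a j) ^ 2) 1 * r j with htdef
  have htsplit : t = ts + tb := by
    rw [htdef, ← Finset.sum_add_sum_compl s fun j => min ((a j) ^ 2) 1 * r j]
    congr 1
    · refine Finset.sum_congr rfl fun j hj => ?_
      rw [hsdef] at hj
      have := (Finset.mem_filter.mp hj).2
      rw [min_eq_left ((sq_le_one_iff_abs_le_one (a j)).mpr this)]
    · refine Finset.sum_congr rfl fun j hj => ?_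
      rw [Finset.mem_compl, hsdef, Finset.mem_filter] at hj
      have h1 : ¬ |a j| ≤ 1 := fun h => hj ⟨Finset.mem_univ _, h⟩
      have h2 : 1 < (a j)^2 := (one_lt_sq_iff_one_lt_abs (a j)).mpr (lt_of_not_ge h1)
      rw [min_eq_right h2.le, one_mul]
  have ht0 : 0 ≤ t := by rw [htsplit]; linarith
  have hgoal : ∫ ω, F ω ∂P ≤ 2 * Real.sqrt t := by
    rcases le_or_gt t 1 with ht1 | ht1
    · have hsq1 : Real.sqrt ts ≤ Real.sqrt t := Real.sqrt_le_sqrt (by linarith [htsplit])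
      have hsq2 : tb ≤ Real.sqrt t := by
        have htt : tb ≤ t := by rw [htsplit]; linarith
        have h1 : Real.sqrt t ≤ 1 := Real.sqrt_le_one.mpr ht1
        nlinarith [Real.sq_sqrt ht0, Real.sqrt_nonneg t]
      linarith [hstep]
    · have h1 : ∫ ω, F ω ∂P ≤ 1 := by
        calc ∫ ω, F ω ∂P ≤ ∫ _ω, (1:ℝ) ∂P :=
              integral_mono hFint (integrable_const 1) fun ω => (hF01 ω).2
          _ = 1 := by rw [integral_const, probReal_univ, one_smul]
      have h2 : 1 ≤ Real.sqrt t := by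
        rw [show (1:ℝ) = Real.sqrt 1 by simp]
        exact Real.sqrt_le_sqrt ht1.le
      linarith
  exact hgoal
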